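/- Let C be a finite multiset of instance values with P(C) ≥ 1. Let C_worst ⊆ C be the sub-multiset consisting of all negative elements of C together with one positive element of C whose prediction value is minimal among the positives of C, and set b_PRAUC(C) = PRAUC(C_worst). Then b_PRAUC(C) is a tight lower bound for PRAUC over sub-multisets: (i) for every sub-multiset C' ⊆ C with P(C') ≥ 1, PRAUC(C') ≥ b_PRAUC(C); and (ii) there exists a sub-multiset C' ⊆ C with P(C') ≥ 1 such that PRAUC(C') = b_PRAUC(C). -/

import Mathlib

/-- An instance value: a label (`true` = positive, i.e. `y = 1`;
`false` = negative, i.e. `y = 0`) together with a real prediction score. -/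
abbrev Inst : Type := Bool × ℝ

/-- `P C`: the number of positive elements of `C`. -/
def P (C : Multiset Inst) : ℕ := (C.filter (fun c => c.1 = true)).card

/-- `N C`: the number of negative elements of `C`. -/
def N (C : Multiset Inst) : ℕ := (C.filter (fun c => c.1 = false)).card

/-- `TP C t`: the number of positives of `C` with prediction strictly above `t`. -/
noncomputable def TP (C : Multiset Inst) (t : ℝ) : ℕ :=
  (C.filter (fun c => c.1 = true ∧ t < c.2)).card

/-- `FP C t`: the number of negatives of `C` with prediction strictly above `t`. -/
noncomputable def FP (C : Multiset Inst) (t : ℝ) : ℕ :=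
  (C.filter (fun c => c.1 = false ∧ t < c.2)).card

/-- The ROC/PR supporting points `(TP, FP)` of `C`, listed in order of
decreasing threshold, for `t` ranging over the prediction values occurring in
`C` together with `t = -∞` (the latter yielding the final point `(P C, N C)`). -/
noncomputable def supportingPoints (C : Multiset Inst) : List (ℝ × ℝ) :=
  (((C.map Prod.snd).toFinset.sort (· ≤ ·)).reverse.map
    (fun t => ((TP C t : ℝ), (FP C t : ℝ)))) ++ [((P C : ℝ), (N C : ℝ))]

/-- The trapezoidal sum `Σ_{i=2}^{k} |FP_i − FP_{i−1}| · (TP_i + TP_{i−1})/2`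
over a list of `(TP, FP)` points. -/
noncomputable def trapROC : List (ℝ × ℝ) → ℝ
  | [] => 0
  | [_] => 0
  | a :: b :: l => |b.2 - a.2| * (b.1 + a.1) / 2 + trapROC (b :: l)

/-- The area under the ROC curve of `C` (defined whenever `P C ≥ 1` and `N C ≥ 1`). -/
noncomputable def ROCAUC (C : Multiset Inst) : ℝ :=
  trapROC (supportingPoints C) / ((P C : ℝ) * (N C : ℝ))

/-- The trapezoidal sum `Σ_{i=2}^{k} |TP_i − TP_{i−1}| ·
(TP_i/(TP_i+FP_i) + TP_{i−1}/(TP_{i−1}+FP_{i−1}))/2` over a list of `(TP, FP)`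
points; in `ℝ`, division by zero yields `0`, realizing the convention `0/0 = 0`. -/
noncomputable def trapPR : List (ℝ × ℝ) → ℝ
  | [] => 0
  | [_] => 0
  | a :: b :: l =>
      |b.1 - a.1| * (b.1 / (b.1 + b.2) + a.1 / (a.1 + a.2)) / 2 + trapPR (b :: l)

/-- The (linearly interpolated) area under the PR curve of `C`
(defined whenever `P C ≥ 1`). -/
noncomputable def PRAUC (C : Multiset Inst) : ℝ :=
  trapPR (supportingPoints C) / (P C : ℝ)

section Helpers

open Multiset

/-- Cardinality of filters is monotone under a membership-restricted implication. -/
lemma card_filter_mono {α : Type*} (s : Multiset α) (p q : α → Prop)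
    [DecidablePred p] [DecidablePred q] (h : ∀ e ∈ s, p e → q e) :
    (s.filter p).card ≤ (s.filter q).card := by
  have h1 : s.filter p = s.filter (fun e => p e ∧ q e) :=
    Multiset.filter_congr (fun x hx => ⟨fun hp => ⟨hp, h x hx hp⟩, And.left⟩)
  rw [h1, ← Multiset.filter_filter]
  exact Multiset.card_le_card (Multiset.filter_le _ _)

lemma exists_of_card_filter_lt {α : Type*} (s : Multiset α) (p q : α → Prop)
    [DecidablePred p] [DecidablePred q]
    (h : (s.filter q).card < (s.filter p).card) : ∃ e ∈ s, p e ∧ ¬ q e := by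
  by_contra hc
  push_neg at hc
  exact absurd (card_filter_mono s p q (fun e he hp => hc e he hp)) (not_le.2 h)

lemma TP_mono (D : Multiset Inst) {t t' : ℝ} (h : t' ≤ t) : TP D t ≤ TP D t' := by
  refine card_filter_mono _ _ _ (fun e _ hp => ⟨hp.1, lt_of_le_of_lt h hp.2⟩)

lemma TP_le_P (D : Multiset Inst) (t : ℝ) : TP D t ≤ P D :=
  card_filter_mono _ _ _ (fun e _ hp => hp.1)

/-- Consecutive elements of a strictly sorted list have no list element between them. -/
lemma sorted_chain'_gap {S : List ℝ} (h : S.Pairwise (· < ·)) :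
    S.IsChain (fun x y => x < y ∧ ∀ v ∈ S, v ≤ x ∨ y ≤ v) := by
  rw [List.isChain_iff_getElem]
  intro i hi
  have hi1 : i + 1 < S.length := by omega
  have hi0 : i < S.length := by omega
  refine ⟨h.rel_get_of_lt (by simp [Fin.lt_def]), ?_⟩
  intro v hv
  obtain ⟨j, hj⟩ := List.mem_iff_get.mp hv
  rcases lt_trichotomy (j : ℕ) i with hji | hji | hji
  · left
    rw [← hj]
    exact le_of_lt (h.rel_get_of_lt (by simpa [Fin.lt_def] using hji))
  · left
    rw [← hj]
    have : j = (⟨i, hi0⟩ : Fin S.length) := Fin.ext hji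
    rw [this]
    exact le_refl _
  · right
    rw [← hj]
    rcases eq_or_lt_of_le (Nat.succ_le_of_lt hji) with heq | hlt
    · have : (⟨i + 1, hi1⟩ : Fin S.length) = j := Fin.ext heq
      rw [← this]
      exact le_refl _
    · exact le_of_lt (h.rel_get_of_lt (by simpa [Fin.lt_def] using hlt))

lemma trapPR_lower (c : ℝ) :
    ∀ (l : List (ℝ × ℝ)) (x z : ℝ × ℝ),
    List.IsChain (fun p q => p.1 ≤ q.1 ∧
      (p.1 < q.1 → c ≤ p.1 / (p.1 + p.2) + q.1 / (q.1 + q.2))) (x :: (l ++ [z])) →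
    (z.1 - x.1) * c / 2 ≤ trapPR (x :: (l ++ [z]))
  | [], x, z, hch => by
    rw [List.nil_append, List.isChain_cons_cons] at hch
    obtain ⟨⟨hle, himp⟩, -⟩ := hch
    show (z.1 - x.1) * c / 2 ≤ |z.1 - x.1| * (z.1 / (z.1 + z.2) + x.1 / (x.1 + x.2)) / 2 + trapPR [z]
    rcases eq_or_lt_of_le hle with heq | hlt
    · simp [trapPR, ← heq]
    · have h1 := himp hlt
      have habs : |z.1 - x.1| = z.1 - x.1 := abs_of_pos (by linarith)
      simp only [trapPR, habs]
      nlinarith [hlt, h1]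
  | y :: l', x, z, hch => by
    rw [List.cons_append, List.isChain_cons_cons] at hch
    obtain ⟨⟨hle, himp⟩, hch'⟩ := hch
    have ih := trapPR_lower c l' y z hch'
    show (z.1 - x.1) * c / 2 ≤
      |y.1 - x.1| * (y.1 / (y.1 + y.2) + x.1 / (x.1 + x.2)) / 2 + trapPR (y :: (l' ++ [z]))
    rcases eq_or_lt_of_le hle with heq | hlt
    · have h0 : |y.1 - x.1| = 0 := by rw [← heq]; simp
      rw [h0, heq]
      linarith [ih]
    · have h1 := himp hlt
      have habs : |y.1 - x.1| = y.1 - x.1 := abs_of_pos (by linarith)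
      rw [habs]
      nlinarith [hlt, h1]

lemma trapPR_upper (c : ℝ) :
    ∀ (l : List (ℝ × ℝ)) (x z : ℝ × ℝ),
    List.IsChain (fun p q => p.1 ≤ q.1 ∧
      (p.1 < q.1 → p.1 / (p.1 + p.2) + q.1 / (q.1 + q.2) ≤ c)) (x :: (l ++ [z])) →
    trapPR (x :: (l ++ [z])) ≤ (z.1 - x.1) * c / 2
  | [], x, z, hch => by
    rw [List.nil_append, List.isChain_cons_cons] at hch
    obtain ⟨⟨hle, himp⟩, -⟩ := hch
    show |z.1 - x.1| * (z.1 / (z.1 + z.2) + x.1 / (x.1 + x.2)) / 2 + trapPR [z] ≤ (z.1 - x.1) * c / 2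
    rcases eq_or_lt_of_le hle with heq | hlt
    · simp [trapPR, ← heq]
    · have h1 := himp hlt
      have habs : |z.1 - x.1| = z.1 - x.1 := abs_of_pos (by linarith)
      simp only [trapPR, habs]
      nlinarith [hlt, h1]
  | y :: l', x, z, hch => by
    rw [List.cons_append, List.isChain_cons_cons] at hch
    obtain ⟨⟨hle, himp⟩, hch'⟩ := hch
    have ih := trapPR_upper c l' y z hch'
    show |y.1 - x.1| * (y.1 / (y.1 + y.2) + x.1 / (x.1 + x.2)) / 2 + trapPR (y :: (l' ++ [z]))
      ≤ (z.1 - x.1) * c / 2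
    rcases eq_or_lt_of_le hle with heq | hlt
    · have h0 : |y.1 - x.1| = 0 := by rw [← heq]; simp
      rw [h0, heq]
      linarith [ih]
    · have h1 := himp hlt
      have habs : |y.1 - x.1| = y.1 - x.1 := abs_of_pos (by linarith)
      rw [habs]
      nlinarith [hlt, h1]

/-- The supporting points satisfy a chain relation, given the two hypotheses about
consecutive thresholds and the final point. -/
lemma chain_supportingPoints (D : Multiset Inst) (R : ℝ × ℝ → ℝ × ℝ → Prop)
    (h1 : ∀ t t', t' < t → (∀ e ∈ D, e.2 ≤ t' ∨ t ≤ e.2) →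
      R ((TP D t : ℝ), (FP D t : ℝ)) ((TP D t' : ℝ), (FP D t' : ℝ)))
    (h2 : ∀ t, (∀ e ∈ D, t ≤ e.2) →
      R ((TP D t : ℝ), (FP D t : ℝ)) ((P D : ℝ), (N D : ℝ))) :
    (supportingPoints D).IsChain R := by
  have hmem : ∀ e ∈ D, e.2 ∈ (D.map Prod.snd).toFinset.sort (· ≤ ·) := by
    intro e he
    rw [Finset.mem_sort, Multiset.mem_toFinset]
    exact Multiset.mem_map_of_mem _ he
  unfold supportingPoints
  rw [List.isChain_append]
  refine ⟨?_, List.isChain_singleton _, ?_⟩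
  · rw [List.isChain_map, List.isChain_reverse]
    have hgap := sorted_chain'_gap (Finset.sortedLT_sort (D.map Prod.snd).toFinset).pairwise
    refine hgap.imp ?_
    rintro a b ⟨hab, hgap'⟩
    exact h1 b a hab (fun e he => hgap' e.2 (hmem e he))
  · intro x hx y hy
    rw [List.getLast?_map, List.getLast?_reverse] at hx
    simp only [List.head?_cons, Option.mem_def, Option.some_inj] at hy
    subst hy
    obtain ⟨t, ht, rfl⟩ := Option.map_eq_some_iff.mp hx
    apply h2 t
    intro e he
    have hmem' := hmem e he
    set S := (D.map Prod.snd).toFinset.sort (· ≤ ·) with hS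
    obtain ⟨tl, hStl⟩ : ∃ tl, S = t :: tl := by
      cases hSc : S with
      | nil => rw [hSc] at ht; simp at ht
      | cons a tl =>
        rw [hSc] at ht
        simp only [List.head?_cons, Option.some_inj] at ht
        exact ⟨tl, by rw [ht]⟩
    have hsorted : S.Pairwise (· < ·) := (Finset.sortedLT_sort _).pairwise
    rw [hStl] at hsorted hmem'
    rcases List.mem_cons.mp hmem' with heq | hmemtl
    · exact le_of_eq heq.symm
    · exact le_of_lt (List.rel_of_pairwise_cons hsorted hmemtl)

/-- Shape of the supporting points of a nonempty multiset: the first point is at the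
maximal threshold. -/
lemma supportingPoints_shape (D : Multiset Inst) (hD : D ≠ 0) :
    ∃ t l, (∀ e ∈ D, e.2 ≤ t) ∧
      supportingPoints D =
        ((TP D t : ℝ), (FP D t : ℝ)) :: (l ++ [((P D : ℝ), (N D : ℝ))]) := by
  set S := (D.map Prod.snd).toFinset.sort (· ≤ ·) with hS
  have hmem : ∀ e ∈ D, e.2 ∈ S := by
    intro e he
    rw [hS, Finset.mem_sort, Multiset.mem_toFinset]
    exact Multiset.mem_map_of_mem _ he
  obtain ⟨e₀, he₀⟩ := Multiset.exists_mem_of_ne_zero hD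
  have hne : S.reverse ≠ [] := by
    simp only [ne_eq, List.reverse_eq_nil_iff]
    intro hnil
    rw [hnil] at hmem
    exact List.not_mem_nil (hmem e₀ he₀)
  obtain ⟨t, l₀, hrev⟩ := List.exists_cons_of_ne_nil hne
  have hrevsorted : S.reverse.Pairwise (fun a b => b < a) := by
    rw [List.pairwise_reverse]
    exact (Finset.sortedLT_sort _).pairwise
  refine ⟨t, l₀.map (fun t => ((TP D t : ℝ), (FP D t : ℝ))), ?_, ?_⟩
  · intro e he
    have : e.2 ∈ S.reverse := List.mem_reverse.mpr (hmem e he)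
    rw [hrev] at this hrevsorted
    rcases List.mem_cons.mp this with heq | hmemtl
    · exact le_of_eq heq
    · exact le_of_lt ((List.pairwise_cons.mp hrevsorted).1 _ hmemtl)
  · show (S.reverse.map _) ++ _ = _
    rw [hrev, List.map_cons, List.cons_append]

/-- Precision lower bound. -/
lemma prec_lower (k f m : ℕ) (hk : 1 ≤ k) (hf : f ≤ m) :
    1 / (1 + (m : ℝ)) ≤ (k : ℝ) / ((k : ℝ) + (f : ℝ)) := by
  have hk' : (1 : ℝ) ≤ k := by exact_mod_cast hk
  have hf' : (f : ℝ) ≤ m := by exact_mod_cast hf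
  have h0f : (0 : ℝ) ≤ f := Nat.cast_nonneg f
  have h0m : (0 : ℝ) ≤ m := Nat.cast_nonneg m
  rw [div_le_div_iff₀ (by linarith) (by linarith)]
  nlinarith

lemma prec_nonneg (a b : ℕ) : (0 : ℝ) ≤ (a : ℝ) / ((a : ℝ) + (b : ℝ)) :=
  div_nonneg (Nat.cast_nonneg a) (by positivity)

end Helpers

section MainAux

lemma jump_exists (D : Multiset Inst) {t t' : ℝ} (h : TP D t < TP D t') :
    ∃ e ∈ D, (e.1 = true ∧ t' < e.2) ∧ ¬(e.1 = true ∧ t < e.2) := by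
  unfold TP at h
  exact exists_of_card_filter_lt D _ _ h

lemma jump_exists_final (D : Multiset Inst) {t : ℝ} (h : TP D t < P D) :
    ∃ e ∈ D, e.1 = true ∧ e.2 ≤ t := by
  unfold TP P at h
  obtain ⟨e, he, hp, hq⟩ := exists_of_card_filter_lt D (fun c => c.1 = true)
    (fun c => c.1 = true ∧ t < c.2) h
  refine ⟨e, he, hp, ?_⟩
  by_contra hc
  exact hq ⟨hp, not_le.mp hc⟩

end MainAux

/-- Let `c₀` be a positive element of `C` whose prediction
value is minimal among the positives of `C`, and let
`C_worst = {c₀} ∪ (negatives of C)`.  Then `b_PRAUC C = PRAUC C_worst` is a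
tight lower bound for the PR AUC over sub-multisets of `C`. -/
theorem bPRAUC_tight_lower_bound (C : Multiset Inst) (hP : 1 ≤ P C)
    (c₀ : Inst) (hc₀ : c₀ ∈ C) (hpos : c₀.1 = true)
    (hmin : ∀ c ∈ C, c.1 = true → c₀.2 ≤ c.2) :
    (∀ C' ≤ C, 1 ≤ P C' →
      PRAUC (c₀ ::ₘ C.filter (fun c => c.1 = false)) ≤ PRAUC C') ∧
    (∃ C' ≤ C, 1 ≤ P C' ∧
      PRAUC C' = PRAUC (c₀ ::ₘ C.filter (fun c => c.1 = false))) := by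
  set v := c₀.2 with hv
  set m := (C.filter (fun e => e.1 = false ∧ v ≤ e.2)).card with hm
  set cb : ℝ := 1 / (1 + (m : ℝ)) with hcb
  have hcb0 : 0 ≤ cb := by positivity
  set F := C.filter (fun c : Inst => c.1 = false) with hF
  set W := c₀ ::ₘ F with hWdef
  have hc₀F : c₀ ∉ F := by
    rw [hF]
    intro h
    have := (Multiset.mem_filter.mp h).2
    rw [hpos] at this
    simp at this
  have hWC : W ≤ C := by
    rw [Multiset.le_iff_count]
    intro a
    rw [hWdef, Multiset.count_cons]
    by_cases ha : a = c₀
    · subst ha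
      rw [Multiset.count_eq_zero.mpr hc₀F, if_pos rfl, zero_add]
      exact Multiset.one_le_count_iff_mem.mpr hc₀
    · rw [if_neg ha, add_zero]
      exact Multiset.count_le_of_le a (hF ▸ Multiset.filter_le _ _)
  have hPW : P W = 1 := by
    rw [hWdef]
    unfold P
    rw [Multiset.filter_cons_of_pos (p := fun c : Inst => c.1 = true) F hpos]
    have h0 : F.filter (fun c : Inst => c.1 = true) = 0 := by
      rw [hF, Multiset.filter_filter]
      rw [Multiset.filter_eq_nil]
      rintro e _ ⟨h1, h2⟩
      rw [h1] at h2
      simp at h2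
    rw [h0]
    simp
  have hNW : N W = N C := by
    rw [hWdef]
    unfold N
    rw [Multiset.filter_cons_of_neg (p := fun c : Inst => c.1 = false) F (by simp [hpos])]
    rw [hF, Multiset.filter_filter]
    apply congrArg
    apply Multiset.filter_congr
    tauto
  have hposW : ∀ e ∈ W, e.1 = true → e = c₀ := by
    intro e he hpe
    rcases Multiset.mem_cons.mp he with h | h
    · exact h
    · exfalso
      have := (Multiset.mem_filter.mp (hF ▸ h)).2
      rw [hpe] at this
      simp at this
  have hmN : m ≤ N C := by
    rw [hm]
    unfold N
    exact card_filter_mono _ _ _ (fun e _ hp => hp.1)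
  -- Key lower bound for arbitrary sub-multisets
  have key_low : ∀ C' ≤ C, 1 ≤ P C' → cb / 2 ≤ PRAUC C' := by
    intro C' hC' hP'
    have hposv : ∀ e ∈ C', e.1 = true → v ≤ e.2 :=
      fun e he hp => hmin e (Multiset.mem_of_le hC' he) hp
    have hne : C' ≠ 0 := by
      intro h0
      rw [h0] at hP'
      simp [P] at hP'
    have hchain : (supportingPoints C').IsChain
        (fun p q => p.1 ≤ q.1 ∧ (p.1 < q.1 → cb ≤ p.1 / (p.1 + p.2) + q.1 / (q.1 + q.2))) := by
      apply chain_supportingPoints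
      · intro t t' htt' hgap
        dsimp only
        refine ⟨by exact_mod_cast TP_mono C' (le_of_lt htt'), ?_⟩
        intro hlt
        have hlt' : TP C' t < TP C' t' := by exact_mod_cast hlt
        obtain ⟨e, he, hpe, hne'⟩ := jump_exists C' hlt'
        have het : e.2 ≤ t := by
          by_contra h
          exact hne' ⟨hpe.1, not_le.mp h⟩
        have hvt : v ≤ t := le_trans (hposv e he hpe.1) het
        have hFP : FP C' t' ≤ m := by
          have h1 : FP C' t' ≤ (C'.filter (fun e : Inst => e.1 = false ∧ v ≤ e.2)).card := by
            unfold FP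
            apply card_filter_mono
            intro e' he' hp'
            refine ⟨hp'.1, ?_⟩
            rcases hgap e' he' with h | h
            · exact absurd hp'.2 (not_lt.mpr h)
            · exact le_trans hvt h
          have h2 : (C'.filter (fun e : Inst => e.1 = false ∧ v ≤ e.2)).card ≤ m := by
            rw [hm]
            exact Multiset.card_le_card (Multiset.monotone_filter_left _ hC')
          omega
        have hk : 1 ≤ TP C' t' := by omega
        have hlow := prec_lower (TP C' t') (FP C' t') m hk hFP
        have hnn := prec_nonneg (TP C' t) (FP C' t)
        rw [hcb]
        linarith
      · intro t htmin
        dsimp only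
        refine ⟨by exact_mod_cast TP_le_P C' t, ?_⟩
        intro hlt
        have hlt' : TP C' t < P C' := by exact_mod_cast hlt
        obtain ⟨e, he, hpe, het⟩ := jump_exists_final C' hlt'
        have hvt : v ≤ t := le_trans (hposv e he hpe) het
        have hNle : N C' ≤ m := by
          have h1 : N C' ≤ (C'.filter (fun e : Inst => e.1 = false ∧ v ≤ e.2)).card := by
            unfold N
            apply card_filter_mono
            intro e' he' hp'
            exact ⟨hp', le_trans hvt (htmin e' he')⟩
          have h2 : (C'.filter (fun e : Inst => e.1 = false ∧ v ≤ e.2)).card ≤ m := by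
            rw [hm]
            exact Multiset.card_le_card (Multiset.monotone_filter_left _ hC')
          omega
        have hlow := prec_lower (P C') (N C') m hP' hNle
        have hnn := prec_nonneg (TP C' t) (FP C' t)
        rw [hcb]
        linarith
    obtain ⟨tmax, l, htmax, hshape⟩ := supportingPoints_shape C' hne
    have hTP0 : TP C' tmax = 0 := by
      unfold TP
      rw [Multiset.card_eq_zero, Multiset.filter_eq_nil]
      rintro e he ⟨-, h2⟩
      exact absurd (htmax e he) (not_le.mpr h2)
    rw [hshape] at hchain
    have htrap := trapPR_lower cb l _ _ hchain
    unfold PRAUC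
    rw [hshape]
    have hP'pos : (0 : ℝ) < (P C' : ℝ) := by exact_mod_cast hP'
    rw [le_div_iff₀ hP'pos]
    have hX0 : ((TP C' tmax : ℕ) : ℝ) = 0 := by rw [hTP0]; simp
    have h2 : ((P C' : ℝ) - ((TP C' tmax : ℕ) : ℝ)) * cb / 2 = cb / 2 * (P C' : ℝ) := by
      rw [hX0]; ring
    linarith [htrap, h2]
  -- Key upper bound for W
  have key_up : PRAUC W ≤ cb / 2 := by
    have hneW : W ≠ 0 := by rw [hWdef]; exact Multiset.cons_ne_zero
    have hchain : (supportingPoints W).IsChain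
        (fun p q => p.1 ≤ q.1 ∧ (p.1 < q.1 → p.1 / (p.1 + p.2) + q.1 / (q.1 + q.2) ≤ cb)) := by
      apply chain_supportingPoints
      · intro t t' htt' _
        dsimp only
        refine ⟨by exact_mod_cast TP_mono W (le_of_lt htt'), ?_⟩
        intro hlt
        have hlt' : TP W t < TP W t' := by exact_mod_cast hlt
        have hTPle : TP W t' ≤ 1 := hPW ▸ TP_le_P W t'
        have hTPt0 : TP W t = 0 := by omega
        have hTPt'1 : TP W t' = 1 := by omega
        obtain ⟨e, he, hpe, -⟩ := jump_exists W hlt'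
        have heq : e = c₀ := hposW e he hpe.1
        have ht'v : t' < v := by rw [hv, ← heq]; exact hpe.2
        have hFPge : m ≤ FP W t' := by
          have h1 : m ≤ (C.filter (fun e : Inst => e.1 = false ∧ t' < e.2)).card := by
            rw [hm]
            exact card_filter_mono _ _ _
              (fun e' _ hp' => ⟨hp'.1, lt_of_lt_of_le ht'v hp'.2⟩)
          have h2 : FP W t' = (C.filter (fun e : Inst => e.1 = false ∧ t' < e.2)).card := by
            unfold FP
            rw [hWdef, Multiset.filter_cons_of_neg
              (p := fun e : Inst => e.1 = false ∧ t' < e.2) F (by simp [hpos])]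
            rw [hF, Multiset.filter_filter]
            apply congrArg
            apply Multiset.filter_congr
            tauto
          omega
        have hpa : (TP W t : ℝ) / ((TP W t : ℝ) + (FP W t : ℝ)) = 0 := by
          rw [hTPt0]
          simp
        have hpb : (TP W t' : ℝ) / ((TP W t' : ℝ) + (FP W t' : ℝ)) ≤ cb := by
          rw [hTPt'1, hcb]
          push_cast
          apply one_div_le_one_div_of_le (by positivity)
          have : (m : ℝ) ≤ (FP W t' : ℝ) := by exact_mod_cast hFPge
          linarith
        rw [hpa]
        linarith
      · intro t htmin
        dsimp only
        refine ⟨by exact_mod_cast TP_le_P W t, ?_⟩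
        intro hlt
        have hlt' : TP W t < P W := by exact_mod_cast hlt
        have hTPt0 : TP W t = 0 := by omega
        have hpa : (TP W t : ℝ) / ((TP W t : ℝ) + (FP W t : ℝ)) = 0 := by
          rw [hTPt0]
          simp
        have hpb : (P W : ℝ) / ((P W : ℝ) + (N W : ℝ)) ≤ cb := by
          rw [hPW, hNW, hcb]
          push_cast
          apply one_div_le_one_div_of_le (by positivity)
          have : (m : ℝ) ≤ (N C : ℝ) := by exact_mod_cast hmN
          linarith
        rw [hpa]
        linarith
    obtain ⟨tmax, l, htmax, hshape⟩ := supportingPoints_shape W hneW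
    rw [hshape] at hchain
    have htrap := trapPR_upper cb l _ _ hchain
    unfold PRAUC
    rw [hshape]
    set T := trapPR (((TP W tmax : ℝ), (FP W tmax : ℝ)) ::
      (l ++ [((P W : ℝ), (N W : ℝ))])) with hT
    have hTPnn : (0 : ℝ) ≤ (TP W tmax : ℝ) := Nat.cast_nonneg _
    have h1 : ((P W : ℕ) : ℝ) = 1 := by rw [hPW]; simp
    rw [h1] at htrap ⊢
    rw [div_one]
    nlinarith [htrap, hTPnn, hcb0]
  constructor
  · intro C' hC' hP'
    exact le_trans key_up (key_low C' hC' hP')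
  · exact ⟨W, hWC, by rw [hPW], rfl⟩
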